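/- Let A and C be real symmetric positive semidefinite n×n matrices. Then there exists L₁ > 0 with C ⪯ L₁²·A if and only if there exists L₂ > 0 with C² ⪯ L₂²·A. -/

import Mathlib

open Matrix

private lemma psd_smul {n : ℕ} {M : Matrix (Fin n) (Fin n) ℝ} (hM : M.PosSemidef)
    {c : ℝ} (hc : 0 ≤ c) : (c • M).PosSemidef := by
  refine ⟨by rw [IsHermitian, conjTranspose_smul, star_trivial, hM.1.eq], fun x => ?_⟩
  have h := mul_nonneg hc (hM.2 x)
  simp only [Finsupp.mul_sum] at h
  simpa only [Matrix.smul_apply, smul_eq_mul, mul_assoc, mul_left_comm c] using h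

private lemma spectral_decomp {n : ℕ} {C : Matrix (Fin n) (Fin n) ℝ} (hC : C.PosSemidef) :
    ∃ V : Matrix (Fin n) (Fin n) ℝ, star V * V = 1 ∧
      C = V * diagonal hC.1.eigenvalues * star V := by
  refine ⟨(hC.1.eigenvectorUnitary : Matrix (Fin n) (Fin n) ℝ),
    (Matrix.mem_unitaryGroup_iff').mp hC.1.eigenvectorUnitary.2, ?_⟩
  have hspec := hC.1.spectral_theorem
  have hco : (RCLike.ofReal ∘ hC.1.eigenvalues : Fin n → ℝ) = hC.1.eigenvalues := by
    funext i; simp [RCLike.ofReal]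
  rwa [hco] at hspec

private lemma conj_sub (n : ℕ) (V D : Matrix (Fin n) (Fin n) ℝ) (hVU : star V * V = 1)
    (c : ℝ) : c • (V * D * star V) - (V * D * star V) * (V * D * star V)
      = V * (c • D - D * D) * star V := by
  have hmul : (V * D * star V) * (V * D * star V) = V * (D * D) * star V := by
    calc (V * D * star V) * (V * D * star V)
        = V * D * (star V * V) * D * star V := by noncomm_ring
      _ = _ := by rw [hVU]; noncomm_ring
  rw [hmul]
  simp only [Matrix.mul_sub, Matrix.sub_mul, Matrix.mul_smul, Matrix.smul_mul, Matrix.mul_assoc]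

private lemma diag_comb {n : ℕ} (lam : Fin n → ℝ) (c : ℝ) :
    c • diagonal lam - diagonal lam * diagonal lam
      = diagonal (fun i => c * lam i - lam i * lam i) := by
  rw [diagonal_mul_diagonal]
  ext i j
  rcases eq_or_ne i j with rfl | h
  · simp
  · simp [diagonal_apply_ne _ h]

private lemma exists_smul_sub_sq {n : ℕ} {C : Matrix (Fin n) (Fin n) ℝ} (hC : C.PosSemidef) :
    ∃ c : ℝ, 0 < c ∧ (c • C - C * C).PosSemidef := by
  obtain ⟨V, hVU, hspec⟩ := spectral_decomp hC
  set lam := hC.1.eigenvalues with hlam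
  have hnn : ∀ i, 0 ≤ lam i := fun i => hC.eigenvalues_nonneg i
  have hsum : 0 ≤ ∑ i, lam i := Finset.sum_nonneg fun i _ => hnn i
  refine ⟨1 + ∑ i, lam i, by linarith, ?_⟩
  rw [hspec, conj_sub n V (diagonal lam) hVU, diag_comb]
  refine PosSemidef.mul_mul_conjTranspose_same (posSemidef_diagonal_iff.mpr fun i => ?_) V
  have h1 : lam i ≤ 1 + ∑ j, lam j := by
    have := Finset.single_le_sum (f := lam) (fun j _ => hnn j) (Finset.mem_univ i)
    linarith
  nlinarith [hnn i]

private lemma exists_smul_sq_sub {n : ℕ} {C : Matrix (Fin n) (Fin n) ℝ} (hC : C.PosSemidef) :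
    ∃ d : ℝ, 0 < d ∧ (d • (C * C) - C).PosSemidef := by
  obtain ⟨V, hVU, hspec⟩ := spectral_decomp hC
  set lam := hC.1.eigenvalues with hlam
  have hnn : ∀ i, 0 ≤ lam i := fun i => hC.eigenvalues_nonneg i
  set d : ℝ := 1 + ∑ i, (if lam i = 0 then 0 else (lam i)⁻¹) with hd
  have hterm : ∀ i, 0 ≤ (if lam i = 0 then 0 else (lam i)⁻¹) := by
    intro i; by_cases h : lam i = 0
    · simp [h]
    · simp [h, inv_nonneg.mpr (hnn i)]
  have hdpos : 0 < d := by
    have : 0 ≤ ∑ i, (if lam i = 0 then 0 else (lam i)⁻¹) :=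
      Finset.sum_nonneg fun i _ => hterm i
    rw [hd]; linarith
  refine ⟨d, hdpos, ?_⟩
  have key : d • (C * C) - C = V * (d • (diagonal lam * diagonal lam) - diagonal lam) * star V := by
    have hmul : (V * diagonal lam * star V) * (V * diagonal lam * star V)
        = V * (diagonal lam * diagonal lam) * star V := by
      calc (V * diagonal lam * star V) * (V * diagonal lam * star V)
          = V * diagonal lam * (star V * V) * diagonal lam * star V := by noncomm_ring
        _ = _ := by rw [hVU]; noncomm_ring
    rw [hspec, hmul]
    simp only [Matrix.mul_sub, Matrix.sub_mul, Matrix.mul_smul, Matrix.smul_mul, Matrix.mul_assoc]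
  rw [key]
  have hdiag : d • (diagonal lam * diagonal lam) - diagonal lam
      = diagonal (fun i => d * (lam i * lam i) - lam i) := by
    rw [diagonal_mul_diagonal]
    ext i j
    rcases eq_or_ne i j with rfl | h
    · simp
    · simp [diagonal_apply_ne _ h]
  rw [hdiag]
  refine PosSemidef.mul_mul_conjTranspose_same (posSemidef_diagonal_iff.mpr fun i => ?_) V
  rcases eq_or_lt_of_le (hnn i) with h0 | hpos
  · simp [← h0]
  · have h1 : (lam i)⁻¹ ≤ d := by
      have := Finset.single_le_sum (f := fun j => if lam j = 0 then 0 else (lam j)⁻¹)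
        (fun j _ => hterm j) (Finset.mem_univ i)
      simp only [if_neg (ne_of_gt hpos)] at this
      rw [hd]; linarith
    have h2 : 1 ≤ d * lam i := by
      rw [← inv_mul_cancel₀ (ne_of_gt hpos)]
      exact mul_le_mul_of_nonneg_right h1 (hnn i)
    nlinarith [hnn i]

/-- Equivalence from the proof of Theorem 3.6: for symmetric positive semidefinite `A`
and `C`, `C ⪯ L₁²·A` for some `L₁ > 0` if and only if `C² ⪯ L₂²·A` for some `L₂ > 0`. -/
theorem loewner_domination_iff_sq_domination
    (n : ℕ) (A C : Matrix (Fin n) (Fin n) ℝ)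
    (hA : A.PosSemidef) (hC : C.PosSemidef) :
    (∃ L₁ : ℝ, 0 < L₁ ∧ (L₁ ^ 2 • A - C).PosSemidef) ↔
      (∃ L₂ : ℝ, 0 < L₂ ∧ (L₂ ^ 2 • A - C * C).PosSemidef) := by
  constructor
  · rintro ⟨L, hL, hP⟩
    obtain ⟨c, hc, hcP⟩ := exists_smul_sub_sq hC
    refine ⟨L * Real.sqrt c, by positivity, ?_⟩
    have hsq : (L * Real.sqrt c) ^ 2 = c * L ^ 2 := by
      rw [mul_pow, Real.sq_sqrt hc.le]; ring
    have heq : (L * Real.sqrt c) ^ 2 • A - C * C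
        = c • (L ^ 2 • A - C) + (c • C - C * C) := by
      rw [hsq, smul_sub, smul_smul]; abel
    rw [heq]
    exact (psd_smul hP hc.le).add hcP
  · rintro ⟨L, hL, hP⟩
    obtain ⟨d, hd, hdP⟩ := exists_smul_sq_sub hC
    refine ⟨L * Real.sqrt d, by positivity, ?_⟩
    have hsq : (L * Real.sqrt d) ^ 2 = d * L ^ 2 := by
      rw [mul_pow, Real.sq_sqrt hd.le]; ring
    have heq : (L * Real.sqrt d) ^ 2 • A - C
        = d • (L ^ 2 • A - C * C) + (d • (C * C) - C) := by
      rw [hsq, smul_sub, smul_smul]; abel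
    rw [heq]
    exact (psd_smul hP hd.le).add hdP
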